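/- Let b_1,...,b_n be nonnegative integers whose support {k : b_k ≠ 0} has greatest common divisor 1 and with Σ b_k > 1, and let h(t) = Σ_{k=1}^n b_k t^k. Let r ∈ (0,1) be the unique real number with h(r) = 1. Then r is the unique complex number z with |z| = r satisfying h(z) = 1. -/

import Mathlib

theorem stmt_2 (n : ℕ) (b : Fin n → ℕ)
    (hgcd : (Finset.univ.filter (fun k : Fin n => b k ≠ 0)).gcd
      (fun k => (k : ℕ) + 1) = 1)
    (hsum : 1 < ∑ k, b k)
    (r : ℝ) (hr : r ∈ Set.Ioo (0 : ℝ) 1)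
    (hroot : (∑ k, (b k : ℝ) * r ^ ((k : ℕ) + 1)) = 1) :
    ∀ z : ℂ, ‖z‖ = r →
      (∑ k, (b k : ℂ) * z ^ ((k : ℕ) + 1)) = 1 → z = (r : ℂ) := by
  intro z habs hz
  obtain ⟨hr0, hr1⟩ := hr
  have hrne : (r : ℂ) ≠ 0 := by exact_mod_cast hr0.ne'
  -- real parts sum to 1
  have hre : (∑ k, ((b k : ℂ) * z ^ ((k : ℕ) + 1)).re) = 1 := by
    rw [← Complex.re_sum, hz]; simp
  -- abs of each term
  have habs' : ∀ k : Fin n, ‖(b k : ℂ) * z ^ ((k : ℕ) + 1)‖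
      = (b k : ℝ) * r ^ ((k : ℕ) + 1) := by
    intro k
    simp [map_mul, map_pow, habs, Complex.norm_natCast]
  -- termwise equality re = abs
  have hkey : ∀ k ∈ Finset.univ, ((b k : ℂ) * z ^ ((k : ℕ) + 1)).re
      = ‖(b k : ℂ) * z ^ ((k : ℕ) + 1)‖ := by
    refine (Finset.sum_eq_sum_iff_of_le ?_).1 ?_
    · intro k _; exact Complex.re_le_norm _
    · rw [hre]
      simp only [habs']
      rw [hroot]
  -- for each k, the term is a nonneg real, namely its abs
  have hterm : ∀ k : Fin n, (b k : ℂ) * z ^ ((k : ℕ) + 1)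
      = ((b k : ℝ) * r ^ ((k : ℕ) + 1) : ℝ) := by
    intro k
    have h1 := hkey k (Finset.mem_univ k)
    have hrenn : 0 ≤ ((b k : ℂ) * z ^ ((k : ℕ) + 1)).re := h1 ▸ norm_nonneg _
    have him : ((b k : ℂ) * z ^ ((k : ℕ) + 1)).im = 0 :=
      Complex.abs_re_eq_norm.1 (by rw [abs_of_nonneg hrenn, h1])
    rw [← habs' k, ← h1]
    exact (Complex.ext_iff.2 ⟨by simp, by simp [him]⟩)
  -- conclude z^{k+1} = r^{k+1} for k in support
  have hpow : ∀ k : Fin n, b k ≠ 0 → z ^ ((k : ℕ) + 1) = (r : ℂ) ^ ((k : ℕ) + 1) := by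
    intro k hk
    have hb : ((b k : ℂ)) ≠ 0 := Nat.cast_ne_zero.2 hk
    have := hterm k
    push_cast at this
    exact mul_left_cancel₀ hb this
  -- w = z / r
  set w : ℂ := z * (r : ℂ)⁻¹ with hw
  have hwpow : ∀ k : Fin n, b k ≠ 0 → w ^ ((k : ℕ) + 1) = 1 := by
    intro k hk
    rw [hw, mul_pow, hpow k hk, inv_pow, mul_inv_cancel₀ (pow_ne_zero _ hrne)]
  have hdvd : orderOf w ∣ (Finset.univ.filter (fun k : Fin n => b k ≠ 0)).gcd
      (fun k => (k : ℕ) + 1) := by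
    refine Finset.dvd_gcd ?_
    intro k hk
    rw [Finset.mem_filter] at hk
    exact orderOf_dvd_of_pow_eq_one (hwpow k hk.2)
  rw [hgcd, Nat.dvd_one] at hdvd
  have hw1 : w = 1 := orderOf_eq_one_iff.1 hdvd
  have : z = (r : ℂ) := by
    rw [hw, mul_inv_eq_one₀ hrne] at hw1
    exact hw1
  exact this
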